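/- Let G be a graph on vertices {x_1,...,x_n, y_1,...,y_n} (all non-isolated) such that X = {x_1,...,x_n} is a minimal vertex cover, Y = {y_1,...,y_n} is a maximal independent set, x_i y_i ∈ E(G) for all i, and the minimum vertex cover size is n. If G is unmixed, then: (i) for distinct i, j, k and z_i ∈ {x_i, y_i}, if z_i x_j ∈ E(G) and y_j x_k ∈ E(G), then z_i x_k ∈ E(G); and (ii) if x_i y_j ∈ E(G) then x_i x_j ∉ E(G). -/

import Mathlib

open SimpleGraph

/-- `C` is a vertex cover of `G`. -/
def IsVC {V : Type*} (G : SimpleGraph V) (C : Set V) : Prop :=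
  ∀ ⦃u v : V⦄, G.Adj u v → u ∈ C ∨ v ∈ C

/-- `C` is a minimal (inclusion-wise) vertex cover of `G`. -/
def IsMinVC {V : Type*} (G : SimpleGraph V) (C : Set V) : Prop :=
  IsVC G C ∧ ∀ C' : Set V, C' ⊆ C → IsVC G C' → C' = C

/-- `A` is an independent set of `G`. -/
def IsIndep {V : Type*} (G : SimpleGraph V) (A : Set V) : Prop :=
  ∀ ⦃u v : V⦄, u ∈ A → v ∈ A → ¬ G.Adj u v

/-- `A` is a maximal independent set of `G`. -/
def IsMaxIndep {V : Type*} (G : SimpleGraph V) (A : Set V) : Prop :=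
  IsIndep G A ∧ ∀ A' : Set V, A ⊆ A' → IsIndep G A' → A' = A

/-- `G` is unmixed: all minimal vertex covers have the same cardinality. -/
def Unmixed {V : Type*} (G : SimpleGraph V) : Prop :=
  ∀ C₁ C₂ : Set V, IsMinVC G C₁ → IsMinVC G C₂ → C₁.ncard = C₂.ncard

/-- Vertex type with the two classes `X = {x_1,…,x_n}` (left) and `Y = {y_1,…,y_n}` (right). -/
abbrev VT (n : ℕ) := Fin n ⊕ Fin n

/-- The vertex `x_i`. -/
def xv {n : ℕ} (i : Fin n) : VT n := Sum.inl i

/-- The vertex `y_i`. -/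
def yv {n : ℕ} (i : Fin n) : VT n := Sum.inr i

/-- The 4-cycle `C_{ij}` (edges `x_iy_i, y_ix_j, x_jy_j, y_jx_i`) is contained in `G`. -/
def HasC2 {n : ℕ} (G : SimpleGraph (VT n)) (i j : Fin n) : Prop :=
  G.Adj (xv i) (yv i) ∧ G.Adj (yv i) (xv j) ∧ G.Adj (xv j) (yv j) ∧ G.Adj (yv j) (xv i)

/-- The `2r`-cycle `C_{i_1…i_r}` given by `f : Fin r → Fin n` is contained in `G`:
edges `x_{f s} y_{f s}` and `y_{f s} x_{f (s+1)}` (cyclically). -/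
def IsCycleIn {n r : ℕ} (G : SimpleGraph (VT n)) (f : Fin r → Fin n) : Prop :=
  ∀ s : Fin r, G.Adj (xv (f s)) (yv (f s)) ∧ G.Adj (yv (f s)) (xv (f (finRotate r s)))

lemma exists_maxIndep {n : ℕ} (G : SimpleGraph (VT n)) (I : Set (VT n)) (hI : IsIndep G I) :
    ∃ A, I ⊆ A ∧ IsMaxIndep G A := by
  have hfin : {A : Set (VT n) | I ⊆ A ∧ IsIndep G A}.Finite := Set.toFinite _
  obtain ⟨A, ⟨hIA, hAind⟩, hmax⟩ :=
    Set.Finite.exists_maximalFor id _ hfin ⟨I, subset_refl I, hI⟩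
  refine ⟨A, hIA, hAind, fun A' hAA' hA'ind => ?_⟩
  exact Set.Subset.antisymm (hmax ⟨hIA.trans hAA', hA'ind⟩ hAA') hAA'

lemma compl_maxIndep_isMinVC {V : Type*} (G : SimpleGraph V) (A : Set V)
    (h : IsMaxIndep G A) : IsMinVC G Aᶜ := by
  constructor
  · intro u v huv
    by_contra hc
    push_neg at hc
    simp only [Set.notMem_compl_iff] at hc
    exact h.1 hc.1 hc.2 huv
  · intro C' hC' hVC
    have hind : IsIndep G C'ᶜ := by
      intro u v hu hv huv
      rcases hVC huv with h' | h' <;> simp_all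
    have hsub : A ⊆ C'ᶜ := Set.subset_compl_comm.mp hC'
    have := h.2 C'ᶜ hsub hind
    rw [← this, compl_compl]

lemma ncard_range_xv {n : ℕ} : (Set.range (xv : Fin n → VT n)).ncard = n := by
  have hinj : Function.Injective (xv : Fin n → VT n) := fun a b h => by simpa [xv] using h
  rw [← Set.image_univ, Set.ncard_image_of_injective _ hinj, Set.ncard_univ]
  simp

lemma key_lemma {n : ℕ} (G : SimpleGraph (VT n))
    (hX : IsMinVC G (Set.range (xv : Fin n → VT n)))
    (hm : ∀ i : Fin n, G.Adj (xv i) (yv i))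
    (hu : Unmixed G) (I : Set (VT n)) (hI : IsIndep G I) (k : Fin n) :
    IsIndep G (insert (xv k) I) ∨ IsIndep G (insert (yv k) I) := by
  classical
  obtain ⟨A, hIA, hA⟩ := exists_maxIndep G I hI
  have hC : IsMinVC G Aᶜ := compl_maxIndep_isMinVC G A hA
  have hcard : (Aᶜ).ncard = n := by
    rw [hu _ _ hC hX, ncard_range_xv]
  -- every pair meets C; counting forces exactly one per pair
  set C := Aᶜ with hCdef
  have hpair : ∀ i : Fin n, xv i ∈ C ∨ yv i ∈ C := fun i => hC.1 (hm i)
  have hone : ¬ (xv k ∈ C ∧ yv k ∈ C) := by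
    rintro ⟨hx, hy⟩
    set π : VT n → Fin n := Sum.elim id id with hπ
    have hfin : C.Finite := Set.toFinite _
    have himg : hfin.toFinset.image π = Finset.univ := by
      apply Finset.eq_univ_of_forall
      intro i
      rcases hpair i with h | h
      · exact Finset.mem_image.2 ⟨xv i, hfin.mem_toFinset.2 h, rfl⟩
      · exact Finset.mem_image.2 ⟨yv i, hfin.mem_toFinset.2 h, rfl⟩
    have hcard' : hfin.toFinset.card = n := by
      rw [← Set.ncard_eq_toFinset_card C hfin]
      exact hcard
    have hinj : Set.InjOn π C := by
      have : (hfin.toFinset.image π).card = hfin.toFinset.card := by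
        rw [himg, hcard']; simp
      have := Finset.card_image_iff.mp this
      rwa [Set.Finite.coe_toFinset] at this
    have : xv k = yv k := hinj hx hy (by simp [π, xv, yv])
    simp [xv, yv] at this
  have hmem : xv k ∈ A ∨ yv k ∈ A := by
    by_contra hc
    push_neg at hc
    exact hone ⟨hc.1, hc.2⟩
  rcases hmem with h | h
  · left
    intro u v hu' hv'
    exact hA.1 (by rcases hu' with rfl | hu' <;> [exact h; exact hIA hu'])
      (by rcases hv' with rfl | hv' <;> [exact h; exact hIA hv'])
  · right
    intro u v hu' hv'
    exact hA.1 (by rcases hu' with rfl | hu' <;> [exact h; exact hIA hu'])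
      (by rcases hv' with rfl | hv' <;> [exact h; exact hIA hv'])

/-- If `G` (in the setup (*)) is unmixed, then conditions (i) and (ii) hold. -/
theorem unmixed_implies_conditions {n : ℕ} (G : SimpleGraph (VT n))
    (hni : ∀ v : VT n, ∃ u : VT n, G.Adj u v)
    (hX : IsMinVC G (Set.range (xv : Fin n → VT n)))
    (hY : IsMaxIndep G (Set.range (yv : Fin n → VT n)))
    (hm : ∀ i : Fin n, G.Adj (xv i) (yv i))
    (hht : ∀ C : Set (VT n), IsVC G C → n ≤ C.ncard)
    (hu : Unmixed G) :
    (∀ i j k : Fin n, i ≠ j → j ≠ k → i ≠ k →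
        ∀ z ∈ ({xv i, yv i} : Set (VT n)),
          G.Adj z (xv j) → G.Adj (yv j) (xv k) → G.Adj z (xv k)) ∧
      (∀ i j : Fin n, G.Adj (xv i) (yv j) → ¬ G.Adj (xv i) (xv j)) := by
  constructor
  · intro i j k hij hjk hik z hz hzj hjk'
    by_contra hzk
    have hI : IsIndep G ({z, xv k} : Set (VT n)) := by
      intro u v hu hv hadj
      rcases hu with rfl | hu <;> rcases hv with rfl | hv
      · exact G.irrefl hadj
      · rw [Set.mem_singleton_iff] at hv; subst hv; exact hzk hadj
      · rw [Set.mem_singleton_iff] at hu; subst hu; exact hzk hadj.symm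
      · rw [Set.mem_singleton_iff] at hu hv; subst hu; subst hv; exact G.irrefl hadj
    rcases key_lemma G hX hm hu _ hI j with h | h
    · exact h (Set.mem_insert _ _) (Set.mem_insert_of_mem _ (Set.mem_insert _ _)) hzj.symm
    · exact h (Set.mem_insert _ _)
        (Set.mem_insert_of_mem _ (Set.mem_insert_of_mem _ (Set.mem_singleton _))) hjk'
  · intro i j h1 h2
    have hI : IsIndep G ({xv i} : Set (VT n)) := by
      intro u v hu hv hadj
      rw [Set.mem_singleton_iff] at hu hv; subst hu; subst hv; exact G.irrefl hadj
    rcases key_lemma G hX hm hu _ hI j with h | h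
    · exact h (Set.mem_insert _ _) (Set.mem_insert_of_mem _ (Set.mem_singleton _)) h2.symm
    · exact h (Set.mem_insert _ _) (Set.mem_insert_of_mem _ (Set.mem_singleton _)) h1.symm
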